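/- Let q, p be integers, a : ℕ → ℤ (with values a₁, a₂, …), and define z : ℕ → ℤ by z₀ = q, z₁ = p, and z_{n+1} = 2·a_n·z_n + z_{n−1} for n ≥ 1. For i ∈ {1,2} and m ≥ 1 define F_i(m+1) = Σ_S 2^{(m+1−i)−2|S|} · Π_{k} a_k, where S ranges over all subsets of {i, i+1, …, m−1} in which any two distinct elements differ by at least 2 (including S = ∅), and the product is over all k with i ≤ k ≤ m such that k ∉ S and k−1 ∉ S. Then for every m ≥ 1: z_{m+1} = p·F_1(m+1) + q·F_2(m+1). -/
import Mathlib


open Finset in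
/-- `Fcoef a i m` is `z^{(i)}_{m+1}`: the sum over all subsets `S` of
`{i, …, m-1}` in which any two distinct elements differ by at least `2`
(including `S = ∅`) of `2^{(m+1-i) - 2|S|}` times the product of the `a_k`
over all `i ≤ k ≤ m` with `k ∉ S` and `k - 1 ∉ S`. -/
def Fcoef (a : ℕ → ℤ) (i m : ℕ) : ℤ :=
  ∑ S ∈ (Finset.Icc i (m - 1)).powerset.filter
      (fun S => ∀ x ∈ S, ∀ y ∈ S, x < y → x + 2 ≤ y),
    (2 : ℤ) ^ ((m + 1 - i) - 2 * S.card) *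
      ∏ k ∈ (Finset.Icc i m).filter (fun k => k ∉ S ∧ k - 1 ∉ S), a k

private lemma adm_card_bound {S : Finset ℕ} {i n : ℕ} (hS : S ⊆ Finset.Icc i n)
    (hA : ∀ x ∈ S, ∀ y ∈ S, x < y → x + 2 ≤ y) : 2 * S.card ≤ n + 2 - i := by
  have hinj : Set.InjOn (· + 1) S := fun x _ y _ h => by simpa using h
  have hdisj : Disjoint S (S.image (· + 1)) := by
    rw [Finset.disjoint_left]
    intro x hx hx'
    obtain ⟨y, hy, rfl⟩ := Finset.mem_image.mp hx'
    rcases lt_trichotomy y (y + 1) with h | h | h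
    · have := hA y hy (y + 1) hx h; omega
    · omega
    · omega
  have hsub : S ∪ S.image (· + 1) ⊆ Finset.Icc i (n + 1) := by
    intro x hx
    rcases Finset.mem_union.mp hx with h | h
    · have := hS h; simp only [Finset.mem_Icc] at *; omega
    · obtain ⟨y, hy, rfl⟩ := Finset.mem_image.mp h
      have := hS hy; simp only [Finset.mem_Icc] at *; omega
  have hcard := Finset.card_le_card hsub
  rw [Finset.card_union_of_disjoint hdisj, Finset.card_image_of_injOn hinj,
    Nat.card_Icc] at hcard
  omega

private lemma Fcoef_rec (a : ℕ → ℤ) (i n : ℕ) (h1 : 1 ≤ i) (h2 : i ≤ n + 1) :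
    Fcoef a i (n + 2) = 2 * a (n + 2) * Fcoef a i (n + 1) + Fcoef a i n := by
  unfold Fcoef
  rw [show n + 2 - 1 = n + 1 from rfl, show n + 1 - 1 = n from rfl]
  rw [← Finset.sum_filter_add_sum_filter_not
      (((Finset.Icc i (n+1)).powerset).filter
        (fun S => ∀ x ∈ S, ∀ y ∈ S, x < y → x + 2 ≤ y)) (fun S => n + 1 ∉ S)]
  congr 1
  · -- case n+1 ∉ S : equals 2 * a (n+2) * Fcoef a i (n+1)
    have hset : (((Finset.Icc i (n+1)).powerset).filter
          (fun S => ∀ x ∈ S, ∀ y ∈ S, x < y → x + 2 ≤ y)).filter (fun S => n + 1 ∉ S)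
        = ((Finset.Icc i n).powerset).filter
          (fun S => ∀ x ∈ S, ∀ y ∈ S, x < y → x + 2 ≤ y) := by
      ext S
      simp only [Finset.mem_filter, Finset.mem_powerset]
      constructor
      · rintro ⟨⟨hsub, hadm⟩, hne⟩
        refine ⟨fun x hx => ?_, hadm⟩
        have := hsub hx
        simp only [Finset.mem_Icc] at *
        have : x ≠ n + 1 := fun h => hne (h ▸ hx)
        omega
      · rintro ⟨hsub, hadm⟩
        refine ⟨⟨fun x hx => ?_, hadm⟩, fun hc => ?_⟩
        · have := hsub hx; simp only [Finset.mem_Icc] at *; omega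
        · have := hsub hc; simp only [Finset.mem_Icc] at this; omega
    rw [hset, Finset.mul_sum]
    refine Finset.sum_congr rfl ?_
    intro S hS
    simp only [Finset.mem_filter, Finset.mem_powerset] at hS
    obtain ⟨hsub, hadm⟩ := hS
    have hcb : 2 * S.card ≤ n + 2 - i := adm_card_bound hsub hadm
    have hne1 : n + 1 ∉ S := fun hc => by
      have := hsub hc; simp only [Finset.mem_Icc] at this; omega
    have hne2 : n + 2 ∉ S := fun hc => by
      have := hsub hc; simp only [Finset.mem_Icc] at this; omega
    have hprod : (Finset.Icc i (n+2)).filter (fun k => k ∉ S ∧ k - 1 ∉ S)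
        = insert (n+2) ((Finset.Icc i (n+1)).filter (fun k => k ∉ S ∧ k - 1 ∉ S)) := by
      ext k
      simp only [Finset.mem_filter, Finset.mem_insert, Finset.mem_Icc]
      constructor
      · rintro ⟨⟨hik, hk⟩, h3, h4⟩
        rcases Nat.eq_or_lt_of_le hk with h | h
        · left; omega
        · right; exact ⟨⟨hik, by omega⟩, h3, h4⟩
      · rintro (rfl | ⟨⟨hik, hk⟩, h3, h4⟩)
        · exact ⟨⟨by omega, le_refl _⟩, hne2, by simpa using hne1⟩
        · exact ⟨⟨hik, by omega⟩, h3, h4⟩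
    rw [hprod, Finset.prod_insert (by simp [Finset.mem_Icc])]
    rw [show n + 2 + 1 - i - 2 * S.card = (n + 1 + 1 - i - 2 * S.card) + 1 by omega,
      pow_succ]
    ring
  · -- case n+1 ∈ S : equals Fcoef a i n
    refine Finset.sum_nbij' (fun S => S.erase (n+1)) (fun S => insert (n+1) S)
      ?_ ?_ ?_ ?_ ?_
    · intro S hS
      simp only [Finset.mem_filter, Finset.mem_powerset, not_not] at hS ⊢
      obtain ⟨⟨hsub, hadm⟩, hmem⟩ := hS
      constructor
      · intro x hx
        have hx' := Finset.mem_of_mem_erase hx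
        have hxne := Finset.ne_of_mem_erase hx
        have h1 := hsub hx'
        simp only [Finset.mem_Icc] at h1 ⊢
        have : x + 2 ≤ n + 1 := hadm x hx' (n+1) hmem (by omega)
        omega
      · intro x hx y hy hxy
        exact hadm x (Finset.mem_of_mem_erase hx) y (Finset.mem_of_mem_erase hy) hxy
    · intro S hS
      simp only [Finset.mem_filter, Finset.mem_powerset, not_not] at hS ⊢
      obtain ⟨hsub, hadm⟩ := hS
      refine ⟨⟨fun x hx => ?_, fun x hx y hy hxy => ?_⟩, Finset.mem_insert_self _ _⟩
      · rcases Finset.mem_insert.mp hx with rfl | hx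
        · simp only [Finset.mem_Icc]; omega
        · have := hsub hx; simp only [Finset.mem_Icc] at *; omega
      · rcases Finset.mem_insert.mp hx with rfl | hx'
        · rcases Finset.mem_insert.mp hy with rfl | hy'
          · omega
          · have := hsub hy'; simp only [Finset.mem_Icc] at this; omega
        · rcases Finset.mem_insert.mp hy with rfl | hy'
          · have := hsub hx'; simp only [Finset.mem_Icc] at this; omega
          · exact hadm x hx' y hy' hxy
    · intro S hS
      simp only [Finset.mem_filter, not_not] at hS
      exact Finset.insert_erase hS.2
    · intro S hS
      simp only [Finset.mem_filter, Finset.mem_powerset] at hS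
      refine Finset.erase_insert (fun hc => ?_)
      have := hS.1 hc; simp only [Finset.mem_Icc] at this; omega
    · intro S hS
      simp only [Finset.mem_filter, Finset.mem_powerset, not_not] at hS
      obtain ⟨⟨hsub, hadm⟩, hmem⟩ := hS
      have hsub' : S.erase (n+1) ⊆ Finset.Icc i (n - 1) := by
        intro x hx
        have hx' := Finset.mem_of_mem_erase hx
        have hxne := Finset.ne_of_mem_erase hx
        have h1 := hsub hx'
        simp only [Finset.mem_Icc] at h1 ⊢
        have : x + 2 ≤ n + 1 := hadm x hx' (n+1) hmem (by omega)
        omega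
      have hcb : 2 * (S.erase (n+1)).card ≤ (n - 1) + 2 - i :=
        adm_card_bound hsub' (fun x hx y hy hxy =>
          hadm x (Finset.mem_of_mem_erase hx) y (Finset.mem_of_mem_erase hy) hxy)
      have hcard : S.card = (S.erase (n+1)).card + 1 := by
        rw [Finset.card_erase_of_mem hmem]
        have : 0 < S.card := Finset.card_pos.mpr ⟨n+1, hmem⟩
        omega
      have hprod : (Finset.Icc i (n+2)).filter (fun k => k ∉ S ∧ k - 1 ∉ S)
          = (Finset.Icc i n).filter
            (fun k => k ∉ S.erase (n+1) ∧ k - 1 ∉ S.erase (n+1)) := by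
        ext k
        simp only [Finset.mem_filter, Finset.mem_Icc, Finset.mem_erase]
        constructor
        · rintro ⟨⟨hik, hk⟩, h3, h4⟩
          have hk1 : k ≠ n + 1 := fun h => h3 (h ▸ hmem)
          have hk2 : k ≠ n + 2 := fun h => h4 (by rw [h]; simpa using hmem)
          exact ⟨⟨hik, by omega⟩, fun hc => h3 hc.2, fun hc => h4 hc.2⟩
        · rintro ⟨⟨hik, hk⟩, h3, h4⟩
          refine ⟨⟨hik, by omega⟩, fun hc => h3 ⟨by omega, hc⟩, fun hc => h4 ⟨by omega, hc⟩⟩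
      rw [hprod, hcard, show n + 2 + 1 - i - 2 * ((S.erase (n+1)).card + 1)
        = n + 1 - i - 2 * (S.erase (n+1)).card by omega]

/-- Closed form for the recurrence `z_{n+1} = 2a_n z_n + z_{n-1}`, `z₀ = q`,
`z₁ = p`: for every `m ≥ 1`, `z_{m+1} = p·z^{(1)}_{m+1} + q·z^{(2)}_{m+1}`. -/
theorem stmt_10 (q p : ℤ) (a : ℕ → ℤ) (z : ℕ → ℤ)
    (hz0 : z 0 = q) (hz1 : z 1 = p)
    (hrec : ∀ n, 1 ≤ n → z (n + 1) = 2 * a n * z n + z (n - 1)) :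
    ∀ m, 1 ≤ m → z (m + 1) = p * Fcoef a 1 m + q * Fcoef a 2 m := by
  have F11 : Fcoef a 1 1 = 2 * a 1 := by
    simp [Fcoef, Finset.filter_singleton, show Finset.Icc 1 0 = (∅ : Finset ℕ) from rfl,
      Finset.Icc_self]
  have F21 : Fcoef a 2 1 = 1 := by
    simp [Fcoef, Finset.filter_singleton, show Finset.Icc 2 0 = (∅ : Finset ℕ) from rfl,
      show Finset.Icc 2 1 = (∅ : Finset ℕ) from rfl]
  have F22 : Fcoef a 2 2 = 2 * a 2 := by
    simp [Fcoef, Finset.filter_singleton, show Finset.Icc 2 1 = (∅ : Finset ℕ) from rfl,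
      Finset.Icc_self]
  have F10 : Fcoef a 1 0 = 1 := by
    simp [Fcoef, Finset.filter_singleton, show Finset.Icc 1 0 = (∅ : Finset ℕ) from rfl]
  have F12 : Fcoef a 1 2 = 2 * a 2 * (2 * a 1) + 1 := by
    rw [Fcoef_rec a 1 0 le_rfl (by omega), F11, F10]
  have key : ∀ n : ℕ, z (n + 2) = p * Fcoef a 1 (n + 1) + q * Fcoef a 2 (n + 1) ∧
      z (n + 3) = p * Fcoef a 1 (n + 2) + q * Fcoef a 2 (n + 2) := by
    intro n
    induction n with
    | zero =>
      constructor
      · rw [show (0:ℕ) + 2 = 1 + 1 from rfl, hrec 1 le_rfl, hz1, hz0, F11, F21]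
        norm_num; ring
      · rw [show (0:ℕ) + 3 = 2 + 1 from rfl, hrec 2 (by omega),
          show (2:ℕ) - 1 = 1 + 1 - 1 from rfl, hrec 1 le_rfl, hz1, hz0]
        norm_num [F12, F22]; ring
    | succ k ih =>
      refine ⟨ih.2, ?_⟩
      rw [show k + 1 + 3 = (k + 3) + 1 by ring, hrec (k + 3) (by omega),
        show k + 3 - 1 = k + 2 from rfl, ih.1, ih.2,
        show k + 1 + 2 = (k + 1) + 2 from rfl,
        Fcoef_rec a 1 (k + 1) le_rfl (by omega),
        Fcoef_rec a 2 (k + 1) (by omega) (by omega)]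
      ring
  intro m hm
  obtain ⟨n, rfl⟩ := Nat.exists_eq_add_of_le hm
  rw [show 1 + n = n + 1 by ring]
  exact (key n).1
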